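/- Let a₁, a₂, a₃ ∈ ℂ be nonzero and let A ∈ M₄(ℂ) be the tridiagonal matrix with zero diagonal, superdiagonal entries a₁, a₂, a₃ and subdiagonal entries a₁⁻¹, a₂⁻¹, a₃⁻¹. Then det(λ·I₄ − A) = λ⁴ − 3λ² + 1 for all λ ∈ ℂ. Consequently, the eigenvalues of A are exactly ±(1+√5)/2 and ±(√5−1)/2, independently of a₁, a₂, a₃. -/

import Mathlib

open Matrix

set_option maxHeartbeats 1000000
noncomputable section

/-- The numerical range of an `n × n` complex matrix:
`W(M) = {⟨Mx, x⟩ : ‖x‖ = 1}` with the standard inner product on `ℂⁿ`. -/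
def nrange {n : ℕ} (M : Matrix (Fin n) (Fin n) ℂ) : Set ℂ :=
  {z | ∃ x : Fin n → ℂ, (∑ i, ‖x i‖ ^ 2 = 1) ∧
    (∑ i, M.mulVec x i * (starRingEnd ℂ) (x i)) = z}

/-- The ellipse with foci `f₁, f₂` and semi-major axis `a`. -/
def ellipseSet (f₁ f₂ : ℂ) (a : ℝ) : Set ℂ :=
  {z | ‖z - f₁‖ + ‖z - f₂‖ = 2 * a}

/-- `S` is bi-elliptical: the convex hull of the union of two nondegenerate
ellipses with distinct centers. -/
def IsBiElliptical (S : Set ℂ) : Prop :=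
  ∃ (f₁ f₂ g₁ g₂ : ℂ) (a a' : ℝ), 0 < a ∧ 0 < a' ∧
    ‖f₁ - f₂‖ < 2 * a ∧ ‖g₁ - g₂‖ < 2 * a' ∧
    (f₁ + f₂) / 2 ≠ (g₁ + g₂) / 2 ∧
    S = convexHull ℝ (ellipseSet f₁ f₂ a ∪ ellipseSet g₁ g₂ a')

/-- The imaginary part `(M - M*) / (2i)` of a square complex matrix. -/
def Mim {n : ℕ} (M : Matrix (Fin n) (Fin n) ℂ) : Matrix (Fin n) (Fin n) ℂ :=
  (2 * Complex.I)⁻¹ • (M - Mᴴ)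

/-- The real part `(M + M*) / 2` of a square complex matrix. -/
def Mre {n : ℕ} (M : Matrix (Fin n) (Fin n) ℂ) : Matrix (Fin n) (Fin n) ℂ :=
  (2 : ℂ)⁻¹ • (M + Mᴴ)

/-- The block matrix `[[α I₂, C], [D, -α I₂]]` as a `4 × 4` matrix. -/
def blockA (α : ℂ) (C D : Matrix (Fin 2) (Fin 2) ℂ) : Matrix (Fin 4) (Fin 4) ℂ :=
  !![α, 0, C 0 0, C 0 1;
     0, α, C 1 0, C 1 1;
     D 0 0, D 0 1, -α, 0;
     D 1 0, D 1 1, 0, -α]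

lemma det_fin_four' (M : Matrix (Fin 4) (Fin 4) ℂ) : M.det =
    M 0 0 * (M 1 1 * (M 2 2 * M 3 3 - M 2 3 * M 3 2) - M 1 2 * (M 2 1 * M 3 3 - M 2 3 * M 3 1) + M 1 3 * (M 2 1 * M 3 2 - M 2 2 * M 3 1))
  - M 0 1 * (M 1 0 * (M 2 2 * M 3 3 - M 2 3 * M 3 2) - M 1 2 * (M 2 0 * M 3 3 - M 2 3 * M 3 0) + M 1 3 * (M 2 0 * M 3 2 - M 2 2 * M 3 0))
  + M 0 2 * (M 1 0 * (M 2 1 * M 3 3 - M 2 3 * M 3 1) - M 1 1 * (M 2 0 * M 3 3 - M 2 3 * M 3 0) + M 1 3 * (M 2 0 * M 3 1 - M 2 1 * M 3 0))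
  - M 0 3 * (M 1 0 * (M 2 1 * M 3 2 - M 2 2 * M 3 1) - M 1 1 * (M 2 0 * M 3 2 - M 2 2 * M 3 0) + M 1 2 * (M 2 0 * M 3 1 - M 2 1 * M 3 0)) := by
  rw [Matrix.det_succ_row_zero]
  simp [Fin.sum_univ_succ, Matrix.det_fin_three, Matrix.submatrix_apply, Fin.succAbove, show ((2:Fin 3).succ = 3) from rfl, show (Fin.castSucc (2:Fin 3) = 2) from rfl]
  ring

theorem stmt14 (a₁ a₂ a₃ : ℂ) (h₁ : a₁ ≠ 0) (h₂ : a₂ ≠ 0) (h₃ : a₃ ≠ 0) :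
    (∀ lam : ℂ,
      (lam • (1 : Matrix (Fin 4) (Fin 4) ℂ)
          - !![0, a₁, 0, 0;
               a₁⁻¹, 0, a₂, 0;
               0, a₂⁻¹, 0, a₃;
               0, 0, a₃⁻¹, 0]).det
        = lam ^ 4 - 3 * lam ^ 2 + 1) ∧
    (∀ μ : ℂ,
      (μ • (1 : Matrix (Fin 4) (Fin 4) ℂ)
          - !![0, a₁, 0, 0;
               a₁⁻¹, 0, a₂, 0;
               0, a₂⁻¹, 0, a₃;
               0, 0, a₃⁻¹, 0]).det = 0 ↔
        (μ = (((1 + Real.sqrt 5) / 2 : ℝ) : ℂ) ∨ μ = -(((1 + Real.sqrt 5) / 2 : ℝ) : ℂ) ∨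
          μ = (((Real.sqrt 5 - 1) / 2 : ℝ) : ℂ) ∨ μ = -(((Real.sqrt 5 - 1) / 2 : ℝ) : ℂ))) := by

  have hdet : ∀ lam : ℂ,
      (lam • (1 : Matrix (Fin 4) (Fin 4) ℂ)
          - !![0, a₁, 0, 0;
               a₁⁻¹, 0, a₂, 0;
               0, a₂⁻¹, 0, a₃;
               0, 0, a₃⁻¹, 0]).det
        = lam ^ 4 - 3 * lam ^ 2 + 1 := by
    intro lam
    rw [det_fin_four']
    simp [Matrix.smul_apply, Matrix.one_apply, Matrix.sub_apply, Matrix.vecHead, Matrix.vecTail]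
    field_simp
    ring
  refine ⟨hdet, fun μ => ?_⟩
  rw [hdet μ]
  have hs : ((Real.sqrt 5 : ℝ) : ℂ) ^ 2 = 5 := by
    rw [← Complex.ofReal_pow, Real.sq_sqrt (by norm_num : (5:ℝ) ≥ 0)]
    norm_num
  set s : ℂ := ((Real.sqrt 5 : ℝ) : ℂ) with hsdef
  have hfac : μ ^ 4 - 3 * μ ^ 2 + 1
      = (μ - (1 + s) / 2) * (μ + (1 + s) / 2) * ((μ - (s - 1) / 2) * (μ + (s - 1) / 2)) := by
    have : (μ - (1 + s) / 2) * (μ + (1 + s) / 2) * ((μ - (s - 1) / 2) * (μ + (s - 1) / 2))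
        = μ ^ 4 - (s^2 + 1) / 2 * μ ^ 2 + ((s^2 - 1)/4)^2 := by ring
    rw [this, hs]
    norm_num
  rw [hfac]
  constructor
  · intro h
    rcases mul_eq_zero.mp h with h | h
    · rcases mul_eq_zero.mp h with h | h
      · left; push_cast; linear_combination h
      · right; left; push_cast; linear_combination h
    · rcases mul_eq_zero.mp h with h | h
      · right; right; left; push_cast; linear_combination h
      · right; right; right; push_cast; linear_combination h
  · intro h
    rcases h with h | h | h | h <;> subst h <;> push_cast <;> ring
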